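/- arXiv:1008.0686 — 6 statements merged into one kernel-verified Lean document; each statement's English description precedes it below -/
import Mathlib

section
/- For all nonnegative integers m and j, and a formal variable t, one has (1/(q)_j) * Σ_{n=0}^{m} q^{mn} ((q^{-m})_n (t q^{-n})_j / (q)_n) = 0 if 0 ≤ j < m, and = (q^{-1} t)^m (t)_{j-m}/(q)_{j-m} if j ≥ m, where (x)_n = ∏_{k=0}^{n-1}(1 - x q^k) is the q-shifted factorial. -/
/-- The q-shifted factorial `(x)_n = ∏_{k=0}^{n-1} (1 - x q^k)`. -/
def qpoch {F : Type*} [Field F] (q x : F) (n : ℕ) : F :=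
  ∏ k ∈ Finset.range n, (1 - x * q ^ k)

section Aux

variable {F : Type*} [Field F]

lemma qpoch_zero (q x : F) : qpoch q x 0 = 1 := by simp [qpoch]

lemma qpoch_succ (q x : F) (n : ℕ) :
    qpoch q x (n + 1) = qpoch q x n * (1 - x * q ^ n) :=
  Finset.prod_range_succ _ _

lemma one_sub_qq_ne (q : F) (hq1 : ∀ n : ℕ, 1 ≤ n → q ^ n ≠ 1) (k : ℕ) :
    (1 : F) - q * q ^ k ≠ 0 := by
  intro h
  apply hq1 (k + 1) (by omega)
  rw [pow_succ, mul_comm]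
  exact (sub_eq_zero.mp h).symm

lemma qpoch_q_ne (q : F) (hq1 : ∀ n : ℕ, 1 ≤ n → q ^ n ≠ 1) (n : ℕ) :
    qpoch q q n ≠ 0 := by
  unfold qpoch
  exact Finset.prod_ne_zero_iff.mpr fun k _ => one_sub_qq_ne q hq1 k

lemma qpoch_shift (q x : F) (hq : q ≠ 0) (n : ℕ) :
    qpoch q (x * q⁻¹) (n + 1) = (1 - x * q⁻¹) * qpoch q x n := by
  unfold qpoch
  rw [Finset.prod_range_succ']
  simp only [pow_zero, mul_one, pow_succ]
  rw [mul_comm]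
  congr 1
  apply Finset.prod_congr rfl
  intro k _
  field_simp

/-- The coefficient identity: `q^((m+1)(n+1)) (q^{-(m+1)})_{n+1}/(q)_{n+1}
 = q^(m(n+1)) (q^{-m})_{n+1}/(q)_{n+1} - q^m · q^(mn) (q^{-m})_n/(q)_n`. -/
lemma coeff_id (q : F) (hq : q ≠ 0) (hq1 : ∀ n : ℕ, 1 ≤ n → q ^ n ≠ 1) (m n : ℕ) :
    q ^ ((m + 1) * (n + 1)) * qpoch q ((q ^ (m + 1))⁻¹) (n + 1) / qpoch q q (n + 1) =
      q ^ (m * (n + 1)) * qpoch q ((q ^ m)⁻¹) (n + 1) / qpoch q q (n + 1) -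
        q ^ m * (q ^ (m * n) * qpoch q ((q ^ m)⁻¹) n / qpoch q q n) := by
  have h1 : ((q ^ (m + 1))⁻¹ : F) = (q ^ m)⁻¹ * q⁻¹ := by
    rw [pow_succ, mul_inv]
  rw [h1, qpoch_shift q _ hq n, qpoch_succ q ((q ^ m)⁻¹) n, qpoch_succ q q n]
  have hQ : qpoch q q n ≠ 0 := qpoch_q_ne q hq1 n
  have hf : (1 : F) - q * q ^ n ≠ 0 := one_sub_qq_ne q hq1 n
  have hqm : (q : F) ^ m ≠ 0 := pow_ne_zero _ hq
  field_simp
  ring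

lemma tshift (q t : F) (hq : q ≠ 0) (n : ℕ) :
    t * (q ^ (n + 1))⁻¹ = t * q⁻¹ * (q ^ n)⁻¹ := by
  rw [pow_succ, mul_inv]; ring

/-- Abbreviation for the summand. -/
noncomputable def gfun (q t : F) (j m : ℕ) (n : ℕ) : F :=
  q ^ (m * n) * qpoch q ((q ^ m)⁻¹) n * qpoch q (t * (q ^ n)⁻¹) j / qpoch q q n

/-- Abbreviation for the main sum. -/
noncomputable def Ssum (q t : F) (j m : ℕ) : F :=
  ∑ n ∈ Finset.range (m + 1), gfun q t j m n

lemma Ssum_rec (q t : F) (hq : q ≠ 0) (hq1 : ∀ n : ℕ, 1 ≤ n → q ^ n ≠ 1) (j m : ℕ) :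
    Ssum q t j (m + 1) = Ssum q t j m - q ^ m * Ssum q (t * q⁻¹) j m := by
  have hterm : ∀ n : ℕ, gfun q t j (m + 1) (n + 1) =
      gfun q t j m (n + 1) - q ^ m * gfun q (t * q⁻¹) j m n := by
    intro n
    unfold gfun
    rw [tshift q t hq n]
    have hc := coeff_id q hq hq1 m n
    calc q ^ ((m + 1) * (n + 1)) * qpoch q ((q ^ (m + 1))⁻¹) (n + 1)
          * qpoch q (t * q⁻¹ * (q ^ n)⁻¹) j / qpoch q q (n + 1)
        = (q ^ ((m + 1) * (n + 1)) * qpoch q ((q ^ (m + 1))⁻¹) (n + 1) / qpoch q q (n + 1))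
            * qpoch q (t * q⁻¹ * (q ^ n)⁻¹) j := by ring
      _ = (q ^ (m * (n + 1)) * qpoch q ((q ^ m)⁻¹) (n + 1) / qpoch q q (n + 1) -
            q ^ m * (q ^ (m * n) * qpoch q ((q ^ m)⁻¹) n / qpoch q q n))
            * qpoch q (t * q⁻¹ * (q ^ n)⁻¹) j := by rw [hc]
      _ = q ^ (m * (n + 1)) * qpoch q ((q ^ m)⁻¹) (n + 1)
            * qpoch q (t * q⁻¹ * (q ^ n)⁻¹) j / qpoch q q (n + 1) -
          q ^ m * (q ^ (m * n) * qpoch q ((q ^ m)⁻¹) n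
            * qpoch q (t * q⁻¹ * (q ^ n)⁻¹) j / qpoch q q n) := by ring
  have h0 : gfun q t j (m + 1) 0 = gfun q t j m 0 := by
    simp [gfun, qpoch_zero]
  have hz : gfun q t j m (m + 1) = 0 := by
    have hp : qpoch q ((q ^ m)⁻¹) (m + 1) = 0 := by
      unfold qpoch
      apply Finset.prod_eq_zero (Finset.mem_range.mpr (Nat.lt_succ_self m))
      rw [inv_mul_cancel₀ (pow_ne_zero _ hq)]
      ring
    simp [gfun, hp]
  unfold Ssum
  calc (∑ n ∈ Finset.range (m + 1 + 1), gfun q t j (m + 1) n)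
      = ∑ n ∈ Finset.range (m + 1), gfun q t j (m + 1) (n + 1) + gfun q t j (m + 1) 0 :=
        Finset.sum_range_succ' _ _
    _ = ∑ n ∈ Finset.range (m + 1),
          (gfun q t j m (n + 1) - q ^ m * gfun q (t * q⁻¹) j m n) + gfun q t j m 0 := by
        rw [h0]
        congr 1
        exact Finset.sum_congr rfl fun n _ => hterm n
    _ = (∑ n ∈ Finset.range (m + 1), gfun q t j m (n + 1) + gfun q t j m 0)
        - q ^ m * ∑ n ∈ Finset.range (m + 1), gfun q (t * q⁻¹) j m n := by
        rw [Finset.sum_sub_distrib, Finset.mul_sum]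
        ring
    _ = (∑ n ∈ Finset.range (m + 1 + 1), gfun q t j m n)
        - q ^ m * ∑ n ∈ Finset.range (m + 1), gfun q (t * q⁻¹) j m n := by
        rw [Finset.sum_range_succ' (gfun q t j m) (m + 1)]
    _ = (∑ n ∈ Finset.range (m + 1), gfun q t j m n)
        - q ^ m * ∑ n ∈ Finset.range (m + 1), gfun q (t * q⁻¹) j m n := by
        rw [Finset.sum_range_succ, hz, add_zero]

end Aux

section Main

variable {F : Type*} [Field F]

lemma Ssum_closed (q : F) (hq : q ≠ 0) (hq1 : ∀ n : ℕ, 1 ≤ n → q ^ n ≠ 1) (j : ℕ) :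
    ∀ (m : ℕ) (t : F), Ssum q t j m =
      if j < m then 0
      else (q⁻¹ * t) ^ m * qpoch q t (j - m) * qpoch q q j / qpoch q q (j - m) := by
  intro m
  induction m with
  | zero =>
    intro t
    unfold Ssum gfun
    rw [Finset.sum_range_one]
    simp only [Nat.zero_mul, Nat.mul_zero, pow_zero, inv_one, mul_one, qpoch_zero, one_mul,
      div_one]
    rw [if_neg (Nat.not_lt_zero j), Nat.sub_zero]
    rw [mul_div_assoc, div_self (qpoch_q_ne q hq1 j), mul_one]
  | succ m ih =>
    intro t
    rw [Ssum_rec q t hq hq1 j m, ih t, ih (t * q⁻¹)]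
    rcases lt_trichotomy j m with hjm | hjm | hjm
    · rw [if_pos hjm, if_pos hjm, if_pos (by omega)]
      ring
    · subst hjm
      rw [if_neg (lt_irrefl j), if_neg (lt_irrefl j), if_pos (Nat.lt_succ_self j)]
      simp only [Nat.sub_self, qpoch_zero]
      field_simp
      have hqi : q ^ j * q⁻¹ ^ j = 1 := by rw [← mul_pow, mul_inv_cancel₀ hq, one_pow]
      linear_combination (-(qpoch q q j * t ^ j) * q⁻¹ ^ j) * hqi
    · -- j ≥ m + 1
      have hd : j - m = (j - (m + 1)) + 1 := by omega
      set d := j - (m + 1) with hdd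
      rw [if_neg (by omega), if_neg (by omega), if_neg (by omega), hd]
      rw [qpoch_succ q t d, qpoch_shift q t hq d, qpoch_succ q q d]
      have hQd : qpoch q q d ≠ 0 := qpoch_q_ne q hq1 d
      have hQj : qpoch q q j ≠ 0 := qpoch_q_ne q hq1 j
      have hfd : (1 : F) - q * q ^ d ≠ 0 := one_sub_qq_ne q hq1 d
      rw [← mul_div_assoc, ← sub_div, div_eq_div_iff (mul_ne_zero hQd hfd) hQd]
      field_simp
      rw [div_pow, div_pow, div_pow, ← pow_mul]
      field_simp
      ring

end Main

theorem stmt_0 {F : Type*} [Field F] (q t : F) (hq : q ≠ 0)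
    (hq1 : ∀ n : ℕ, 1 ≤ n → q ^ n ≠ 1) (m j : ℕ) :
    (qpoch q q j)⁻¹ *
      ∑ n ∈ Finset.range (m + 1),
        q ^ (m * n) * qpoch q ((q ^ m)⁻¹) n * qpoch q (t * (q ^ n)⁻¹) j / qpoch q q n =
    if j < m then 0
    else (q⁻¹ * t) ^ m * qpoch q t (j - m) / qpoch q q (j - m) := by
  have h : (∑ n ∈ Finset.range (m + 1),
      q ^ (m * n) * qpoch q ((q ^ m)⁻¹) n * qpoch q (t * (q ^ n)⁻¹) j / qpoch q q n)
      = Ssum q t j m := rfl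
  rw [h, Ssum_closed q hq hq1 j m t]
  by_cases hjm : j < m
  · rw [if_pos hjm, if_pos hjm, mul_zero]
  · rw [if_neg hjm, if_neg hjm]
    have hQj : qpoch q q j ≠ 0 := qpoch_q_ne q hq1 j
    have hQd : qpoch q q (j - m) ≠ 0 := qpoch_q_ne q hq1 (j - m)
    field_simp
end

section
/- For all nonnegative integers m and formal variables s, t: Σ_{n=0}^{m} q^{mn} ((q^{-m})_n/(q)_n) (q^{-n} s t)_n = (q^{-1} s t)^m, where (x)_n is the q-shifted factorial ∏_{k=0}^{n-1}(1 - x q^k). -/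
section Aux

variable {F : Type*} [Field F]

/-- Numerator of the Gaussian binomial: `∏_{k<n} (1 - q^(m-k))`. -/
def auxN (q : F) (m n : ℕ) : F := ∏ k ∈ Finset.range n, (1 - q ^ (m - k))

/-- Denominator: `∏_{k<n} (1 - q^(k+1))`. -/
def auxD (q : F) (n : ℕ) : F := ∏ k ∈ Finset.range n, (1 - q ^ (k + 1))

/-- Newton-basis factor: `∏_{k<n} (w - q^k)`. -/
def auxP (q w : F) (n : ℕ) : F := ∏ k ∈ Finset.range n, (w - q ^ k)

lemma auxN_zero (q : F) {m n : ℕ} (h : m < n) : auxN q m n = 0 := by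
  apply Finset.prod_eq_zero (Finset.mem_range.mpr h)
  simp

lemma auxD_ne (q : F) (hq1 : ∀ n : ℕ, 1 ≤ n → q ^ n ≠ 1) (n : ℕ) : auxD q n ≠ 0 := by
  apply Finset.prod_ne_zero_iff.mpr
  intro k _
  exact sub_ne_zero.mpr (Ne.symm (hq1 (k + 1) (by omega)))

lemma aux_pascal (q : F) (m n : ℕ) :
    auxN q (m + 1) (n + 1) = q ^ (n + 1) * auxN q m (n + 1) + (1 - q ^ (n + 1)) * auxN q m n := by
  rcases le_or_gt n m with h | h
  · have h1 : auxN q (m + 1) (n + 1) = auxN q m n * (1 - q ^ (m + 1)) := by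
      rw [auxN, Finset.prod_range_succ']
      congr 1
      exact Finset.prod_congr rfl fun k _ => by congr 2; omega
    have h2 : auxN q m (n + 1) = auxN q m n * (1 - q ^ (m - n)) := by
      rw [auxN, Finset.prod_range_succ]; rfl
    have h3 : q ^ (n + 1) * q ^ (m - n) = q ^ (m + 1) := by
      rw [← pow_add]; congr 1; omega
    rw [h1, h2]
    linear_combination (auxN q m n) * h3
  · rw [auxN_zero q (by omega : m + 1 < n + 1), auxN_zero q (by omega : m < n + 1),
      auxN_zero q h]
    ring

lemma aux_core (q : F) (hq1 : ∀ n : ℕ, 1 ≤ n → q ^ n ≠ 1) (w : F) (m : ℕ) :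
    ∑ n ∈ Finset.range (m + 1), auxN q m n / auxD q n * auxP q w n = w ^ m := by
  induction m with
  | zero => simp [auxN, auxD, auxP]
  | succ m ih =>
    have hg0 : q ^ (0 : ℕ) * (auxN q m 0 / auxD q 0) * auxP q w 0 = 1 := by
      simp [auxN, auxD, auxP]
    have hgm : q ^ (m + 1) * (auxN q m (m + 1) / auxD q (m + 1)) * auxP q w (m + 1) = 0 := by
      simp [auxN_zero q (by omega : m < m + 1)]
    have key : ∀ n ∈ Finset.range (m + 1),
        auxN q (m + 1) (n + 1) / auxD q (n + 1) * auxP q w (n + 1)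
          = q ^ (n + 1) * (auxN q m (n + 1) / auxD q (n + 1)) * auxP q w (n + 1)
            + auxN q m n / auxD q n * auxP q w n * (w - q ^ n) := by
      intro n _
      have hD : auxD q (n + 1) = auxD q n * (1 - q ^ (n + 1)) := Finset.prod_range_succ _ _
      have hP : auxP q w (n + 1) = auxP q w n * (w - q ^ n) := Finset.prod_range_succ _ _
      have hne : (1 : F) - q ^ (n + 1) ≠ 0 :=
        sub_ne_zero.mpr (Ne.symm (hq1 (n + 1) (by omega)))
      have hDn : auxD q n ≠ 0 := auxD_ne q hq1 n
      rw [aux_pascal, hD, hP]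
      field_simp
    have e1 : ∑ n ∈ Finset.range (m + 1),
          q ^ (n + 1) * (auxN q m (n + 1) / auxD q (n + 1)) * auxP q w (n + 1)
        = (∑ n ∈ Finset.range (m + 1), q ^ n * (auxN q m n / auxD q n) * auxP q w n) - 1 := by
      have a1 := Finset.sum_range_succ'
        (fun n => q ^ n * (auxN q m n / auxD q n) * auxP q w n) (m + 1)
      have a2 := Finset.sum_range_succ
        (fun n => q ^ n * (auxN q m n / auxD q n) * auxP q w n) (m + 1)
      rw [hgm] at a2
      rw [hg0] at a1
      linear_combination a2 - a1
    have e2 : ∑ n ∈ Finset.range (m + 1), auxN q m n / auxD q n * auxP q w n * (w - q ^ n)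
        = w * (∑ n ∈ Finset.range (m + 1), auxN q m n / auxD q n * auxP q w n)
          - ∑ n ∈ Finset.range (m + 1), q ^ n * (auxN q m n / auxD q n) * auxP q w n := by
      rw [Finset.mul_sum, ← Finset.sum_sub_distrib]
      exact Finset.sum_congr rfl fun n _ => by ring
    have hf0 : auxN q (m + 1) 0 / auxD q 0 * auxP q w 0 = 1 := by simp [auxN, auxD, auxP]
    rw [Finset.sum_range_succ', Finset.sum_congr rfl key, Finset.sum_add_distrib, e1, e2, ih,
      hf0]
    ring

lemma aux_term (q s t : F) (hq : q ≠ 0) {m n : ℕ} (hnm : n ≤ m) :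
    q ^ (m * n) * qpoch q ((q ^ m)⁻¹) n / qpoch q q n * qpoch q ((q ^ n)⁻¹ * s * t) n
      = auxN q m n / auxD q n * auxP q (q⁻¹ * s * t) n := by
  have hqm : (q : F) ^ m ≠ 0 := pow_ne_zero m hq
  have hqn : (q : F) ^ n ≠ 0 := pow_ne_zero n hq
  -- (i) qpoch q q n = auxD q n
  have hi : qpoch q q n = auxD q n := by
    refine Finset.prod_congr rfl fun k _ => ?_
    rw [pow_succ]; ring
  -- (ii)
  have hii : q ^ (m * n) * qpoch q ((q ^ m)⁻¹) n
      = (∏ k ∈ Finset.range n, -(q ^ k : F)) * auxN q m n := by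
    have e : q ^ (m * n) = ∏ _k ∈ Finset.range n, (q ^ m : F) := by
      rw [Finset.prod_const, Finset.card_range, ← pow_mul]
    rw [e, qpoch, ← Finset.prod_mul_distrib, auxN, ← Finset.prod_mul_distrib]
    refine Finset.prod_congr rfl fun k hk => ?_
    have hk' : k < n := Finset.mem_range.mp hk
    have h3 : q ^ k * q ^ (m - k) = q ^ m := by rw [← pow_add]; congr 1; omega
    have h4 : q ^ m * (q ^ m)⁻¹ = 1 := mul_inv_cancel₀ hqm
    linear_combination -h3 - q ^ k * h4
  -- (iii)
  have hiii : qpoch q ((q ^ n)⁻¹ * s * t) n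
      = (∏ k ∈ Finset.range n, (-(q ^ (k + 1)) * (q ^ n)⁻¹ : F)) * auxP q (q⁻¹ * s * t) n := by
    have e : qpoch q ((q ^ n)⁻¹ * s * t) n
        = ∏ k ∈ Finset.range n,
            ((-(q ^ (k + 1)) * (q ^ n)⁻¹) * (q⁻¹ * s * t - q ^ (n - 1 - k))) := by
      refine Finset.prod_congr rfl fun k hk => ?_
      have hk' : k < n := Finset.mem_range.mp hk
      have h3 : q ^ (k + 1) * q ^ (n - 1 - k) = q ^ n := by rw [← pow_add]; congr 1; omega
      have h4 : q ^ n * (q ^ n)⁻¹ = 1 := mul_inv_cancel₀ hqn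
      have h7 : q ^ (k + 1) * q⁻¹ = q ^ k := by
        rw [pow_succ, mul_assoc, mul_inv_cancel₀ hq, mul_one]
      calc 1 - (q ^ n)⁻¹ * s * t * q ^ k
          = (q ^ n * (q ^ n)⁻¹) - (q ^ n)⁻¹ * s * t * (q ^ (k + 1) * q⁻¹) := by rw [h4, h7]
        _ = (q ^ (k + 1) * q ^ (n - 1 - k)) * (q ^ n)⁻¹
            - (q ^ n)⁻¹ * s * t * (q ^ (k + 1) * q⁻¹) := by rw [h3]
        _ = (-(q ^ (k + 1)) * (q ^ n)⁻¹) * (q⁻¹ * s * t - q ^ (n - 1 - k)) := by ring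
    rw [e, Finset.prod_mul_distrib]
    congr 1
    exact Finset.prod_range_reflect (fun k => q⁻¹ * s * t - q ^ k) n
  -- (iv) scalar product is 1
  have hiv : (∏ k ∈ Finset.range n, -(q ^ k : F))
      * (∏ k ∈ Finset.range n, (-(q ^ (k + 1)) * (q ^ n)⁻¹ : F)) = 1 := by
    rw [← Finset.prod_range_reflect (fun k => (-(q ^ (k + 1)) * (q ^ n)⁻¹ : F)) n,
      ← Finset.prod_mul_distrib]
    rw [Finset.prod_congr rfl (fun k hk => ?_), Finset.prod_const_one]
    have hk' : k < n := Finset.mem_range.mp hk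
    have h2 : n - 1 - k + 1 = n - k := by omega
    have h3 : q ^ k * q ^ (n - k) = q ^ n := by rw [← pow_add]; congr 1; omega
    have h4 : q ^ n * (q ^ n)⁻¹ = 1 := mul_inv_cancel₀ hqn
    rw [h2]
    calc -(q ^ k : F) * (-(q ^ (n - k)) * (q ^ n)⁻¹)
        = (q ^ k * q ^ (n - k)) * (q ^ n)⁻¹ := by ring
      _ = 1 := by rw [h3, h4]
  rw [hi, hii, hiii]
  rw [div_mul_eq_mul_div, div_mul_eq_mul_div]
  congr 1
  calc (∏ k ∈ Finset.range n, -(q ^ k : F)) * auxN q m n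
        * ((∏ k ∈ Finset.range n, (-(q ^ (k + 1)) * (q ^ n)⁻¹ : F)) * auxP q (q⁻¹ * s * t) n)
      = ((∏ k ∈ Finset.range n, -(q ^ k : F))
          * (∏ k ∈ Finset.range n, (-(q ^ (k + 1)) * (q ^ n)⁻¹ : F)))
        * (auxN q m n * auxP q (q⁻¹ * s * t) n) := by ring
    _ = auxN q m n * auxP q (q⁻¹ * s * t) n := by rw [hiv, one_mul]

end Aux

theorem stmt_1 {F : Type*} [Field F] (q s t : F) (hq : q ≠ 0)
    (hq1 : ∀ n : ℕ, 1 ≤ n → q ^ n ≠ 1) (m : ℕ) :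
    ∑ n ∈ Finset.range (m + 1),
      q ^ (m * n) * qpoch q ((q ^ m)⁻¹) n / qpoch q q n * qpoch q ((q ^ n)⁻¹ * s * t) n =
    (q⁻¹ * s * t) ^ m := by
  rw [Finset.sum_congr rfl fun n hn =>
    aux_term q s t hq (Nat.lt_succ_iff.mp (Finset.mem_range.mp hn))]
  exact aux_core q hq1 (q⁻¹ * s * t) m
end

section
/- Let b : ℕ → R be a sequence in a commutative Q(q)-algebra R, and define ∇_q(b)(n) := Σ_{i=0}^{n} q^i ((q^{-n})_i/(q)_i) b(i). Then for every nonnegative integer m: Σ_{n=0}^{m} ∇_q(b)(n) B_n(q^m) = b(m), where B_n(z) := ∏_{j=1}^{n}(z - q^{j-1})/(1 - q^j) and (x)_i := ∏_{k=0}^{i-1}(1 - x q^k). -/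
/-- `B_n(z) = ∏_{j=1}^{n} (z - q^{j-1})/(1 - q^j)`. -/
def Bpoly {F : Type*} [Field F] (q z : F) (n : ℕ) : F :=
  ∏ j ∈ Finset.range n, (z - q ^ j) / (1 - q ^ (j + 1))

/-- `∇_q(b)(n) = Σ_{i=0}^{n} q^i ((q^{-n})_i/(q)_i) b(i)` for a sequence in an algebra. -/
def nablaq {F : Type*} [Field F] {R : Type*} [CommRing R] [Algebra F R]
    (q : F) (b : ℕ → R) (n : ℕ) : R :=
  ∑ i ∈ Finset.range (n + 1), (q ^ i * qpoch q ((q ^ n)⁻¹) i / qpoch q q i) • b i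

namespace Stmt6

open Finset

/-- Triangular number `0 + 1 + ⋯ + (n-1)`. -/
def e (n : ℕ) : ℕ := ∑ j ∈ Finset.range n, j

lemma e_succ (n : ℕ) : e (n + 1) = e n + n := Finset.sum_range_succ _ _

lemma e_sq (i : ℕ) : e i * 2 + i = i * i := by
  induction i with
  | zero => simp [e]
  | succ n ih =>
    rw [e_succ]
    have h : (n + 1) * (n + 1) = n * n + 2 * n + 1 := by ring
    omega

lemma e_add (a b : ℕ) : e (a + b) = e a + e b + a * b := by
  induction b with
  | zero => simp [e]
  | succ n ih =>
    have h1 : a + (n + 1) = (a + n) + 1 := by omega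
    rw [h1, e_succ, ih, e_succ]
    ring

lemma e_key (i t : ℕ) : e (i + t) + i + e i = e t + (i + t) * i := by
  have h1 := e_add i t
  have h2 := e_sq i
  have h3 : (i + t) * i = i * i + i * t := by ring
  omega

variable {F : Type*} [Field F] {q : F}

/-- `(q)_a = ∏_{k=1}^{a} (1 - q^k)`. -/
def P (q : F) (a : ℕ) : F := ∏ k ∈ Finset.range a, (1 - q ^ (k + 1))

/-- `qb q N t` is the Gaussian binomial `[N choose t]_q` (0 when `t > N`). -/
def qb (q : F) (N t : ℕ) : F := ∏ j ∈ Finset.range t, (1 - q ^ (N - j)) / (1 - q ^ (j + 1))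

lemma one_sub_ne (hq1 : ∀ n : ℕ, 1 ≤ n → q ^ n ≠ 1) {k : ℕ} (hk : 1 ≤ k) :
    1 - q ^ k ≠ 0 :=
  sub_ne_zero.mpr fun h => hq1 k hk h.symm

lemma P_ne (hq1 : ∀ n : ℕ, 1 ≤ n → q ^ n ≠ 1) (a : ℕ) : P q a ≠ 0 :=
  Finset.prod_ne_zero_iff.mpr fun k _ => one_sub_ne hq1 (by omega)

lemma P_succ (a : ℕ) : P q (a + 1) = P q a * (1 - q ^ (a + 1)) :=
  Finset.prod_range_succ _ _

lemma prod_num (hq1 : ∀ n : ℕ, 1 ≤ n → q ^ n ≠ 1) {t N : ℕ} (h : t ≤ N) :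
    ∏ j ∈ Finset.range t, (1 - q ^ (N - j)) = P q N / P q (N - t) := by
  induction t with
  | zero => simp [div_self (P_ne hq1 N)]
  | succ s ih =>
    rw [Finset.prod_range_succ, ih (by omega)]
    have hNs : N - s = (N - (s + 1)) + 1 := by omega
    rw [hNs, P_succ]
    have n1 := P_ne (q := q) hq1 (N - (s + 1))
    have n2 := one_sub_ne (q := q) hq1 (k := N - (s + 1) + 1) (by omega)
    field_simp

lemma qb_eq (hq1 : ∀ n : ℕ, 1 ≤ n → q ^ n ≠ 1) {t N : ℕ} (h : t ≤ N) :
    qb q N t = P q N / (P q t * P q (N - t)) := by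
  unfold qb
  rw [Finset.prod_div_distrib, prod_num hq1 h]
  have hP : ∏ j ∈ Finset.range t, (1 - q ^ (j + 1)) = P q t := rfl
  rw [hP, div_div]
  ring

lemma qb_zero {N t : ℕ} (h : N < t) : qb q N t = 0 := by
  apply Finset.prod_eq_zero (Finset.mem_range.mpr h)
  simp

lemma qb_self (hq1 : ∀ n : ℕ, 1 ≤ n → q ^ n ≠ 1) (N : ℕ) : qb q N N = 1 := by
  rw [qb_eq hq1 le_rfl, Nat.sub_self]
  have : P q 0 = 1 := by simp [P]
  rw [this, mul_one, div_self (P_ne hq1 N)]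

lemma qb_zero_right (N : ℕ) : qb q N 0 = 1 := by simp [qb]

lemma qb_pascal (hq1 : ∀ n : ℕ, 1 ≤ n → q ^ n ≠ 1) {t N : ℕ} (h : t ≤ N) :
    qb q (N + 1) (t + 1) = q ^ (t + 1) * qb q N (t + 1) + qb q N t := by
  rcases eq_or_lt_of_le h with rfl | hlt
  · rw [qb_self hq1, qb_zero (by omega), qb_self hq1]; ring
  · obtain ⟨s, rfl⟩ : ∃ s, N = t + 1 + s := ⟨N - t - 1, by omega⟩
    rw [qb_eq hq1 (by omega), qb_eq hq1 (by omega), qb_eq hq1 (by omega)]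
    have h1 : t + 1 + s + 1 - (t + 1) = s + 1 := by omega
    have h2 : t + 1 + s - (t + 1) = s := by omega
    have h3 : t + 1 + s - t = s + 1 := by omega
    rw [h1, h2, h3]
    have e1 : P q (t + 1 + s + 1) = P q (t + 1 + s) * (1 - q ^ (t + 1 + s + 1)) := P_succ _
    have e2 : P q (s + 1) = P q s * (1 - q ^ (s + 1)) := P_succ _
    have e3 : P q (t + 1) = P q t * (1 - q ^ (t + 1)) := P_succ _
    have hx : q ^ (t + 1 + s + 1) = q ^ (t + 1) * q ^ (s + 1) := by
      rw [← pow_add]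
      congr 1
    have n1 := P_ne (q := q) hq1 (t + 1 + s)
    have n2 := P_ne (q := q) hq1 s
    have n3 := P_ne (q := q) hq1 t
    have n4 := one_sub_ne (q := q) hq1 (k := s + 1) (by omega)
    have n5 := one_sub_ne (q := q) hq1 (k := t + 1) (by omega)
    rw [e1, e2, e3, hx]
    field_simp
    ring

lemma altsum (hq1 : ∀ n : ℕ, 1 ≤ n → q ^ n ≠ 1) (N : ℕ) :
    ∑ t ∈ Finset.range (N + 1), (-1 : F) ^ t * q ^ (e t) * qb q N t
      = if N = 0 then 1 else 0 := by
  cases N with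
  | zero => simp [e, qb_zero_right]
  | succ M =>
    simp only [Nat.succ_ne_zero, if_false]
    rw [Finset.sum_range_succ']
    have key : ∀ s ∈ Finset.range (M + 1),
        (-1 : F) ^ (s + 1) * q ^ (e (s + 1)) * qb q (M + 1) (s + 1)
          = (fun u => (-1 : F) ^ u * q ^ (e (u + 1)) * qb q M u) (s + 1)
            - (fun u => (-1 : F) ^ u * q ^ (e (u + 1)) * qb q M u) s := by
      intro s hs
      have hsM : s ≤ M := by have := Finset.mem_range.mp hs; omega
      simp only
      rw [qb_pascal hq1 hsM, e_succ (s + 1), pow_add]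
      ring
    have tele := Finset.sum_range_sub
      (f := fun u => (-1 : F) ^ u * q ^ (e (u + 1)) * qb q M u) (M + 1)
    rw [Finset.sum_congr rfl key, tele]
    have hz : qb q M (M + 1) = 0 := qb_zero (by omega)
    simp [hz, e, qb_zero_right]

lemma qb_tri (hq1 : ∀ n : ℕ, 1 ≤ n → q ^ n ≠ 1) {i n m : ℕ} (hi : i ≤ n) (hn : n ≤ m) :
    qb q m n * qb q n i = qb q m i * qb q (m - i) (n - i) := by
  obtain ⟨t, rfl⟩ : ∃ t, n = i + t := ⟨n - i, by omega⟩
  obtain ⟨u, rfl⟩ : ∃ u, m = i + t + u := ⟨m - (i + t), by omega⟩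
  have h2 : i + t - i = t := by omega
  have h3 : i + t + u - i = t + u := by omega
  rw [h2, h3]
  rw [qb_eq hq1 (by omega), qb_eq hq1 (by omega), qb_eq hq1 (by omega),
    qb_eq hq1 (by omega)]
  have h1 : i + t + u - (i + t) = u := by omega
  have h4 : t + u - t = u := by omega
  rw [h1, h2, h3, h4]
  have ha := P_ne (q := q) hq1 (i + t)
  have hb := P_ne (q := q) hq1 u
  have hc := P_ne (q := q) hq1 i
  have hd := P_ne (q := q) hq1 t
  have he := P_ne (q := q) hq1 (t + u)
  field_simp

lemma Bpoly_eq {n m : ℕ} (h : n ≤ m) :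
    Bpoly q (q ^ m) n = (-1 : F) ^ n * q ^ (e n) * qb q m n := by
  unfold Bpoly qb
  have step : ∀ j ∈ Finset.range n,
      (q ^ m - q ^ j) / (1 - q ^ (j + 1))
        = (-1 * q ^ j) * ((1 - q ^ (m - j)) / (1 - q ^ (j + 1))) := by
    intro j hj
    have hj' : j ≤ m := by have := Finset.mem_range.mp hj; omega
    have hx : q ^ j * q ^ (m - j) = q ^ m := by rw [← pow_add]; congr 1; omega
    rw [mul_div_assoc']
    congr 1
    linear_combination -hx
  rw [Finset.prod_congr rfl step, Finset.prod_mul_distrib, Finset.prod_mul_distrib,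
    Finset.prod_const, Finset.prod_pow_eq_pow_sum, Finset.card_range]
  rfl

lemma qpoch_q (i : ℕ) : qpoch q q i = P q i := by
  unfold qpoch P
  refine Finset.prod_congr rfl fun k _ => ?_
  rw [← pow_succ']

lemma qpoch_inv (hq : q ≠ 0) {i n : ℕ} (h : i ≤ n) :
    qpoch q ((q ^ n)⁻¹) i
      = (-1 : F) ^ i * q ^ (e i) * (q ^ (n * i))⁻¹
          * ∏ k ∈ Finset.range i, (1 - q ^ (n - k)) := by
  have hqn : q ^ n ≠ 0 := pow_ne_zero _ hq
  have step : ∀ k ∈ Finset.range i,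
      (1 - (q ^ n)⁻¹ * q ^ k)
        = (-1 * q ^ k * (q ^ n)⁻¹) * (1 - q ^ (n - k)) := by
    intro k hk
    have hk' : k ≤ n := by have := Finset.mem_range.mp hk; omega
    have hx : q ^ k * q ^ (n - k) = q ^ n := by rw [← pow_add]; congr 1; omega
    field_simp
    linear_combination -hx
  rw [qpoch, Finset.prod_congr rfl step, Finset.prod_mul_distrib,
    Finset.prod_mul_distrib, Finset.prod_mul_distrib, Finset.prod_const,
    Finset.prod_const, Finset.prod_pow_eq_pow_sum, Finset.card_range,
    inv_pow, ← pow_mul]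
  rfl

lemma qb_alt (n i : ℕ) :
    (∏ k ∈ Finset.range i, (1 - q ^ (n - k))) / P q i = qb q n i := by
  unfold qb P
  rw [Finset.prod_div_distrib]

lemma term_eq (hq : q ≠ 0) (hq1 : ∀ n : ℕ, 1 ≤ n → q ^ n ≠ 1) {i t m : ℕ}
    (h : i + t ≤ m) :
    Bpoly q (q ^ m) (i + t)
        * (q ^ i * qpoch q ((q ^ (i + t))⁻¹) i / qpoch q q i)
      = qb q m i * ((-1 : F) ^ t * q ^ (e t) * qb q (m - i) t) := by
  rw [Bpoly_eq h, qpoch_inv hq (by omega), qpoch_q]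
  have hstep : q ^ i * ((-1 : F) ^ i * q ^ (e i) * (q ^ ((i + t) * i))⁻¹
        * ∏ k ∈ Finset.range i, (1 - q ^ (i + t - k))) / P q i
      = (-1 : F) ^ i * (q ^ i * q ^ (e i) * (q ^ ((i + t) * i))⁻¹)
        * ((∏ k ∈ Finset.range i, (1 - q ^ (i + t - k))) / P q i) := by
    ring
  rw [hstep, qb_alt]
  have hsign : (-1 : F) ^ (i + t) * (-1 : F) ^ i = (-1 : F) ^ t := by
    rw [← pow_add]
    have h2 : i + t + i = 2 * i + t := by omega
    rw [h2, pow_add, pow_mul]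
    simp
  have hpow : q ^ (e (i + t)) * (q ^ i * q ^ (e i) * (q ^ ((i + t) * i))⁻¹)
      = q ^ (e t) := by
    have hk : e (i + t) + i + e i = e t + (i + t) * i := e_key i t
    have h1 : q ^ (e (i + t)) * q ^ i * q ^ (e i) = q ^ (e t) * q ^ ((i + t) * i) := by
      rw [← pow_add, ← pow_add, hk, pow_add]
    have h2 : q ^ ((i + t) * i) ≠ 0 := pow_ne_zero _ hq
    field_simp
    linear_combination h1
  have htri := qb_tri (q := q) hq1 (i := i) (n := i + t) (m := m) (by omega) h
  have h2 : i + t - i = t := by omega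
  rw [h2] at htri
  calc (-1 : F) ^ (i + t) * q ^ (e (i + t)) * qb q m (i + t)
        * ((-1 : F) ^ i * (q ^ i * q ^ (e i) * (q ^ ((i + t) * i))⁻¹) * qb q (i + t) i)
      = ((-1 : F) ^ (i + t) * (-1 : F) ^ i)
          * (q ^ (e (i + t)) * (q ^ i * q ^ (e i) * (q ^ ((i + t) * i))⁻¹))
          * (qb q m (i + t) * qb q (i + t) i) := by ring
    _ = (-1 : F) ^ t * q ^ (e t) * (qb q m i * qb q (m - i) t) := by
        rw [hsign, hpow, htri]
    _ = qb q m i * ((-1 : F) ^ t * q ^ (e t) * qb q (m - i) t) := by ring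

lemma inner_sum (hq : q ≠ 0) (hq1 : ∀ n : ℕ, 1 ≤ n → q ^ n ≠ 1) {i m : ℕ}
    (h : i ≤ m) :
    ∑ n ∈ Finset.Icc i m,
        Bpoly q (q ^ m) n * (q ^ i * qpoch q ((q ^ n)⁻¹) i / qpoch q q i)
      = if i = m then 1 else 0 := by
  have hIcc : Finset.Icc i m = Finset.Ico i (m + 1) := by
    rw [Finset.Ico_add_one_right_eq_Icc]
  rw [hIcc, Finset.sum_Ico_eq_sum_range]
  have hm : m + 1 - i = (m - i) + 1 := by omega
  rw [hm]
  have key : ∀ t ∈ Finset.range (m - i + 1),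
      Bpoly q (q ^ m) (i + t) * (q ^ i * qpoch q ((q ^ (i + t))⁻¹) i / qpoch q q i)
        = qb q m i * ((-1 : F) ^ t * q ^ (e t) * qb q (m - i) t) := by
    intro t ht
    exact term_eq hq hq1 (by have := Finset.mem_range.mp ht; omega)
  rw [Finset.sum_congr rfl key, ← Finset.mul_sum, altsum hq1]
  rcases eq_or_lt_of_le h with rfl | hlt
  · simp [qb_self hq1]
  · have : m - i ≠ 0 := by omega
    simp [this, if_neg (by omega : ¬ i = m)]

end Stmt6

theorem stmt_6 {F : Type*} [Field F] {R : Type*} [CommRing R] [Algebra F R]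
    (q : F) (hq : q ≠ 0) (hq1 : ∀ n : ℕ, 1 ≤ n → q ^ n ≠ 1) (b : ℕ → R) (m : ℕ) :
    ∑ n ∈ Finset.range (m + 1), Bpoly q (q ^ m) n • nablaq q b n = b m := by
  classical
  unfold nablaq
  have step1 : ∀ n ∈ Finset.range (m + 1),
      Bpoly q (q ^ m) n
          • ∑ i ∈ Finset.range (n + 1), (q ^ i * qpoch q ((q ^ n)⁻¹) i / qpoch q q i) • b i
        = ∑ i ∈ Finset.range (n + 1),
            (Bpoly q (q ^ m) n * (q ^ i * qpoch q ((q ^ n)⁻¹) i / qpoch q q i)) • b i := by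
    intro n _
    rw [Finset.smul_sum]
    refine Finset.sum_congr rfl fun i _ => ?_
    rw [smul_smul]
  rw [Finset.sum_congr rfl step1]
  rw [Finset.sum_comm' (t' := Finset.range (m + 1)) (s' := fun i => Finset.Icc i m)
    (fun n i => by
      simp only [Finset.mem_range, Finset.mem_Icc]
      omega)]
  have step2 : ∀ i ∈ Finset.range (m + 1),
      ∑ n ∈ Finset.Icc i m,
          (Bpoly q (q ^ m) n * (q ^ i * qpoch q ((q ^ n)⁻¹) i / qpoch q q i)) • b i
        = (if i = m then (1 : F) else 0) • b i := by
    intro i hi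
    rw [← Finset.sum_smul, Stmt6.inner_sum hq hq1 (by have := Finset.mem_range.mp hi; omega)]
  rw [Finset.sum_congr rfl step2]
  simp [ite_smul]
end

section
/- Define, for a composition k = (k₁,…,k_r) of positive integers and n ∈ ℕ, the finite harmonic q-sum A_k(n) := Σ_{n ≥ m₁ > ⋯ > m_r > 0} q^{(k₁-1)m₁ + ⋯ + (k_r-1)m_r} / ([m₁]^{k₁}⋯[m_r]^{k_r}) with [m] = (1-q^m)/(1-q). Then for any two single-letter compositions, A_{(i)}(n) · A_{(j)}(n) = A_{(i,j)}(n) + A_{(j,i)}(n) + A_{(i+j)}(n) + (1-q) A_{(i+j-1)}(n) for all i, j ≥ 1 and n ∈ ℕ (with the convention that A_{(0)} is interpreted via the formula only when i+j-1 ≥ 1). -/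
/-- The q-integer `[m] = (1-q^m)/(1-q)`. -/
def qint {F : Type*} [Field F] (q : F) (k : ℕ) : F :=
  (1 - q ^ k) / (1 - q)

/-- Depth-one harmonic sum `A_{(i)}(n) = Σ_{n ≥ m ≥ 1} q^{(i-1)m}/[m]^i`. -/
def A1 {F : Type*} [Field F] (q : F) (i n : ℕ) : F :=
  ∑ m ∈ Finset.Icc 1 n, q ^ ((i - 1) * m) / qint q m ^ i

/-- Depth-two harmonic sum `A_{(i,j)}(n) = Σ_{n ≥ m₁ > m₂ ≥ 1}
`q^{(i-1)m₁+(j-1)m₂}/([m₁]^i [m₂]^j)`. -/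
def A2 {F : Type*} [Field F] (q : F) (i j n : ℕ) : F :=
  ∑ m₁ ∈ Finset.Icc 1 n, ∑ m₂ ∈ Finset.Icc 1 (m₁ - 1),
    q ^ ((i - 1) * m₁ + (j - 1) * m₂) / (qint q m₁ ^ i * qint q m₂ ^ j)

lemma qint_mul {F : Type*} [Field F] (q : F) (hq : q ≠ 1) (m : ℕ) :
    (1 - q) * qint q m = 1 - q ^ m := by
  have h : (1 : F) - q ≠ 0 := sub_ne_zero.mpr (Ne.symm hq)
  unfold qint
  field_simp

lemma qint_ne_zero {F : Type*} [Field F] (q : F)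
    (hq1 : ∀ n : ℕ, 1 ≤ n → q ^ n ≠ 1) {m : ℕ} (hm : 1 ≤ m) : qint q m ≠ 0 := by
  have h1 : (1 : F) - q ≠ 0 := by
    have := hq1 1 le_rfl
    simp only [pow_one] at this
    exact sub_ne_zero.mpr (Ne.symm this)
  have h2 : (1 : F) - q ^ m ≠ 0 := sub_ne_zero.mpr fun h => hq1 m hm h.symm
  exact div_ne_zero h2 h1

lemma diag {F : Type*} [Field F] (q : F) (hq : q ≠ 1) {M : ℕ}
    (hD : qint q M ≠ 0) (a b : ℕ) :
    q ^ (a * M) / qint q M ^ (a + 1) * (q ^ (b * M) / qint q M ^ (b + 1)) =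
    q ^ ((a + b + 1) * M) / qint q M ^ (a + b + 2) +
      (1 - q) * (q ^ ((a + b) * M) / qint q M ^ (a + b + 1)) := by
  have hmul := qint_mul q hq M
  field_simp
  ring_nf
  linear_combination (-(q ^ (a * M) * q ^ (M * b) * qint q M ^ 3 *
    qint q M ^ (a * 2) * qint q M ^ (b * 2))) * hmul

lemma A1_succ {F : Type*} [Field F] (q : F) (i n : ℕ) :
    A1 q i (n + 1) = A1 q i n + q ^ ((i - 1) * (n + 1)) / qint q (n + 1) ^ i := by
  unfold A1
  rw [Finset.sum_Icc_succ_top (by omega)]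

lemma A2_succ {F : Type*} [Field F] (q : F) (i j n : ℕ) :
    A2 q i j (n + 1) = A2 q i j n +
      q ^ ((i - 1) * (n + 1)) / qint q (n + 1) ^ i * A1 q j n := by
  unfold A2 A1
  rw [Finset.sum_Icc_succ_top (by omega)]
  congr 1
  rw [Finset.mul_sum]
  simp only [Nat.add_sub_cancel]
  refine Finset.sum_congr rfl fun m hm => ?_
  rw [pow_add, div_mul_div_comm]

theorem stmt_12 {F : Type*} [Field F] (q : F)
    (hq1 : ∀ n : ℕ, 1 ≤ n → q ^ n ≠ 1) (i j n : ℕ) (hi : 1 ≤ i) (hj : 1 ≤ j) :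
    A1 q i n * A1 q j n =
      A2 q i j n + A2 q j i n + A1 q (i + j) n + (1 - q) * A1 q (i + j - 1) n := by
  obtain ⟨a, rfl⟩ : ∃ a, i = a + 1 := ⟨i - 1, by omega⟩
  obtain ⟨b, rfl⟩ : ∃ b, j = b + 1 := ⟨j - 1, by omega⟩
  have e2 : a + 1 + (b + 1) - 1 = a + b + 1 := by omega
  have e3 : a + 1 + (b + 1) = a + b + 2 := by omega
  rw [e2, e3]
  induction n with
  | zero => simp [A1, A2]
  | succ n ih =>
    have hq : q ≠ 1 := by
      have := hq1 1 le_rfl; simpa using this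
    have hD : qint q (n + 1) ≠ 0 := qint_ne_zero q hq1 (by omega)
    rw [A1_succ, A1_succ, A2_succ, A2_succ, A1_succ, A1_succ]
    simp only [Nat.add_sub_cancel, show a + b + 2 - 1 = a + b + 1 from by omega,
      show a + b + 1 - 1 = a + b from by omega]
    have hdiag := diag q hq hD a b
    linear_combination ih + hdiag
end

section
/- Define, for a composition k = (k₁,…,k_r) and n ∈ ℕ, S_k(n) := Σ_{n ≥ m₁ ≥ ⋯ ≥ m_r ≥ 1} q^{m₁+⋯+m_r} / ([m₁]^{k₁}⋯[m_r]^{k_r}) with [m] = (1-q^m)/(1-q). Then for all i, j ≥ 1 and n ∈ ℕ: S_{(i)}(n) · S_{(j)}(n) = S_{(i,j)}(n) + S_{(j,i)}(n) - S_{(i+j)}(n) + (1-q) S_{(i+j-1)}(n). -/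
/-- Depth-one sum `S_{(i)}(n) = Σ_{n ≥ m ≥ 1} q^m/[m]^i`. -/
def S1 {F : Type*} [Field F] (q : F) (i n : ℕ) : F :=
  ∑ m ∈ Finset.Icc 1 n, q ^ m / qint q m ^ i

/-- Depth-two sum `S_{(i,j)}(n) = Σ_{n ≥ m₁ ≥ m₂ ≥ 1} q^{m₁+m₂}/([m₁]^i [m₂]^j)`. -/
def S2 {F : Type*} [Field F] (q : F) (i j n : ℕ) : F :=
  ∑ m₁ ∈ Finset.Icc 1 n, ∑ m₂ ∈ Finset.Icc 1 m₁,
    q ^ (m₁ + m₂) / (qint q m₁ ^ i * qint q m₂ ^ j)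

lemma double_sum_split {F : Type*} [AddCommGroup F] (f : ℕ → ℕ → F) (n : ℕ) :
    (∑ m₁ ∈ Finset.Icc 1 n, ∑ m₂ ∈ Finset.Icc 1 n, f m₁ m₂) + ∑ m ∈ Finset.Icc 1 n, f m m =
    (∑ m₁ ∈ Finset.Icc 1 n, ∑ m₂ ∈ Finset.Icc 1 m₁, f m₁ m₂) +
      ∑ m₁ ∈ Finset.Icc 1 n, ∑ m₂ ∈ Finset.Icc 1 m₁, f m₂ m₁ := by
  induction n with
  | zero => simp
  | succ n ih =>
    have h : 1 ≤ n + 1 := Nat.le_add_left 1 n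
    rw [Finset.sum_Icc_succ_top h, Finset.sum_Icc_succ_top h, Finset.sum_Icc_succ_top h,
      Finset.sum_Icc_succ_top h]
    simp_rw [Finset.sum_Icc_succ_top h]
    simp only [Finset.sum_add_distrib]
    linear_combination (norm := abel) ih

theorem stmt_13 {F : Type*} [Field F] (q : F)
    (hq1 : ∀ n : ℕ, 1 ≤ n → q ^ n ≠ 1) (i j n : ℕ) (hi : 1 ≤ i) (hj : 1 ≤ j) :
    S1 q i n * S1 q j n =
      S2 q i j n + S2 q j i n - S1 q (i + j) n + (1 - q) * S1 q (i + j - 1) n := by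
  have hq : (1 : F) - q ≠ 0 := sub_ne_zero.mpr fun h => hq1 1 le_rfl (by simpa using h.symm)
  have hm : ∀ m : ℕ, 1 ≤ m → qint q m ≠ 0 := fun m h =>
    div_ne_zero (sub_ne_zero.mpr fun h' => hq1 m h h'.symm) hq
  have key := double_sum_split
    (fun m₁ m₂ => q ^ (m₁ + m₂) / (qint q m₁ ^ i * qint q m₂ ^ j)) n
  have e1 : S1 q i n * S1 q j n =
      ∑ m₁ ∈ Finset.Icc 1 n, ∑ m₂ ∈ Finset.Icc 1 n,
        q ^ (m₁ + m₂) / (qint q m₁ ^ i * qint q m₂ ^ j) := by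
    rw [S1, S1, Finset.sum_mul_sum]
    refine Finset.sum_congr rfl fun m₁ _ => Finset.sum_congr rfl fun m₂ _ => ?_
    rw [pow_add, div_mul_div_comm]
  have e2 : (∑ m₁ ∈ Finset.Icc 1 n, ∑ m₂ ∈ Finset.Icc 1 m₁,
      q ^ (m₂ + m₁) / (qint q m₂ ^ i * qint q m₁ ^ j)) = S2 q j i n := by
    rw [S2]
    refine Finset.sum_congr rfl fun m₁ _ => Finset.sum_congr rfl fun m₂ _ => ?_
    rw [add_comm m₂ m₁, mul_comm]
  have e3 : (∑ m ∈ Finset.Icc 1 n, q ^ (m + m) / (qint q m ^ i * qint q m ^ j)) =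
      S1 q (i + j) n - (1 - q) * S1 q (i + j - 1) n := by
    rw [S1, S1, Finset.mul_sum, ← Finset.sum_sub_distrib]
    refine Finset.sum_congr rfl fun m hmem => ?_
    have h1 : 1 ≤ m := (Finset.mem_Icc.mp hmem).1
    have hq0 := hm m h1
    have hint : (1 - q) * qint q m = 1 - q ^ m := by
      rw [qint]; field_simp
    obtain ⟨k, hk⟩ : ∃ k, i + j = k + 1 := ⟨i + j - 1, by omega⟩
    rw [← pow_add, hk]
    simp only [Nat.add_sub_cancel]
    field_simp
    linear_combination (q ^ m * qint q m ^ k) * hint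
  have e4 : (∑ m₁ ∈ Finset.Icc 1 n, ∑ m₂ ∈ Finset.Icc 1 m₁,
      q ^ (m₁ + m₂) / (qint q m₁ ^ i * qint q m₂ ^ j)) = S2 q i j n := rfl
  rw [← e1, e2, e3, e4] at key
  linear_combination key
end

section
/- Let ξ_i := Σ_{k=0}^{i-1} C(i-1,k) (-ħ)^{i-1-k} z_{k+1} be elements of the free module with basis {z_n}_{n≥1} over Q[ħ], equipped with the bilinear product z_i ∘_- z_j := -z_{i+j} + ħ z_{i+j-1}. Then for all i, j ≥ 1: ξ_i ∘_- ξ_j = -ξ_{i+j}. -/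
open Polynomial

/-- The free `ℚ[ħ]`-module on generators `{z_n}`, as finitely supported functions;
the basis element `z_n` is `Finsupp.single n 1`, and `ħ` is `Polynomial.X`. -/
abbrev Zmod : Type := ℕ →₀ Polynomial ℚ

/-- The bilinear product `∘₋` with `z_i ∘₋ z_j = -z_{i+j} + ħ z_{i+j-1}`. -/
noncomputable def circMinus (a b : Zmod) : Zmod :=
  a.sum fun i c => b.sum fun j d =>
    (c * d) • (-(Finsupp.single (i + j) (1 : Polynomial ℚ)) +
      Finsupp.single (i + j - 1) (Polynomial.X : Polynomial ℚ))

/-- `ξ_i = Σ_{k=0}^{i-1} C(i-1,k) (-ħ)^{i-1-k} z_{k+1}`. -/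
noncomputable def xi (i : ℕ) : Zmod :=
  ∑ k ∈ Finset.range i,
    ((Nat.choose (i - 1) k : Polynomial ℚ) * (-Polynomial.X) ^ (i - 1 - k)) •
      Finsupp.single (k + 1) (1 : Polynomial ℚ)

noncomputable def toP : Zmod →+ Polynomial (Polynomial ℚ) where
  toFun f := ⟨AddMonoidAlgebra.ofCoeff f⟩
  map_zero' := rfl
  map_add' _ _ := Polynomial.ofFinsupp_add

lemma toP_inj : Function.Injective toP := fun _ _ h => congrArg (fun p => p.toFinsupp.coeff) h

lemma toP_single (n : ℕ) (c : Polynomial ℚ) : toP (Finsupp.single n c) = monomial n c :=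
  Polynomial.ofFinsupp_single n c

lemma circ_zero_left (b : Zmod) : circMinus 0 b = 0 := by simp [circMinus]
lemma circ_zero_right (a : Zmod) : circMinus a 0 = 0 := by simp [circMinus]

lemma circ_add_left (a a' b : Zmod) : circMinus (a + a') b = circMinus a b + circMinus a' b := by
  unfold circMinus
  rw [Finsupp.sum_add_index']
  · intro i; simp
  · intro i c1 c2
    rw [← Finsupp.sum_add]
    apply Finsupp.sum_congr
    intro j _
    rw [add_mul, add_smul]

lemma circ_add_right (a b b' : Zmod) : circMinus a (b + b') = circMinus a b + circMinus a b' := by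
  unfold circMinus
  rw [← Finsupp.sum_add]
  apply Finsupp.sum_congr
  intro i _
  rw [Finsupp.sum_add_index']
  · intro j; simp
  · intro j d1 d2
    rw [mul_add, add_smul]

lemma circ_sum_left {α} (s : Finset α) (f : α → Zmod) (b : Zmod) :
    circMinus (∑ x ∈ s, f x) b = ∑ x ∈ s, circMinus (f x) b := by
  classical
  induction s using Finset.cons_induction with
  | empty => simp [circ_zero_left]
  | cons x s hx ih => rw [Finset.sum_cons, Finset.sum_cons, circ_add_left, ih]

lemma circ_sum_right {α} (s : Finset α) (a : Zmod) (g : α → Zmod) :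
    circMinus a (∑ x ∈ s, g x) = ∑ x ∈ s, circMinus a (g x) := by
  classical
  induction s using Finset.cons_induction with
  | empty => simp [circ_zero_right]
  | cons x s hx ih => rw [Finset.sum_cons, Finset.sum_cons, circ_add_right, ih]

lemma circ_single_single (a b : ℕ) (c d : Polynomial ℚ) :
    circMinus (Finsupp.single a c) (Finsupp.single b d) =
      Finsupp.single (a + b) (-(c * d)) + Finsupp.single (a + b - 1) (c * d * Polynomial.X) := by
  unfold circMinus
  rw [Finsupp.sum_single_index, Finsupp.sum_single_index]
  · simp [smul_add, Finsupp.smul_single, smul_eq_mul]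
  · simp
  · simp

lemma binom (m : ℕ) :
    ∑ k ∈ Finset.range (m + 1),
      (Polynomial.C ((Nat.choose m k : Polynomial ℚ) * (-Polynomial.X) ^ (m - k)) :
        Polynomial (Polynomial ℚ)) * Polynomial.X ^ k
      = (Polynomial.X - Polynomial.C Polynomial.X) ^ m := by
  rw [sub_eq_add_neg, add_pow]
  refine Finset.sum_congr rfl fun k hk => ?_
  simp only [map_mul, map_pow, map_neg, Polynomial.C_eq_natCast]
  ring

lemma xi_eq (n : ℕ) : xi n = ∑ k ∈ Finset.range n,
    Finsupp.single (k + 1)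
      ((Nat.choose (n - 1) k : Polynomial ℚ) * (-Polynomial.X) ^ (n - 1 - k)) := by
  unfold xi
  refine Finset.sum_congr rfl fun k hk => ?_
  rw [Finsupp.smul_single, smul_eq_mul, mul_one]

lemma toP_xi (m : ℕ) : toP (xi (m + 1)) =
    Polynomial.X * (Polynomial.X - Polynomial.C Polynomial.X) ^ m := by
  rw [xi_eq, map_sum, ← binom m, Finset.mul_sum]
  refine Finset.sum_congr rfl fun k hk => ?_
  rw [toP_single, Nat.add_sub_cancel, ← Polynomial.C_mul_X_pow_eq_monomial]
  ring

theorem stmt_17 (i j : ℕ) (hi : 1 ≤ i) (hj : 1 ≤ j) :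
    circMinus (xi i) (xi j) = -xi (i + j) := by
  obtain ⟨m, rfl⟩ : ∃ m, i = m + 1 := ⟨i - 1, (Nat.succ_pred_eq_of_pos hi).symm⟩
  obtain ⟨n, rfl⟩ : ∃ n, j = n + 1 := ⟨j - 1, (Nat.succ_pred_eq_of_pos hj).symm⟩
  apply toP_inj
  have h1 : m + 1 + (n + 1) = (m + n + 1) + 1 := by omega
  rw [map_neg, h1, toP_xi]
  rw [show -(Polynomial.X * (Polynomial.X - Polynomial.C Polynomial.X) ^ (m + n + 1)
        : Polynomial (Polynomial ℚ)) =
      (Polynomial.X - Polynomial.C Polynomial.X) ^ m *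
        (Polynomial.X - Polynomial.C Polynomial.X) ^ n *
        (Polynomial.X * (Polynomial.C Polynomial.X - Polynomial.X)) from by ring]
  rw [← binom m, ← binom n, Finset.sum_mul_sum]
  simp only [Finset.sum_mul]
  rw [xi_eq (m + 1), xi_eq (n + 1), Nat.add_sub_cancel, Nat.add_sub_cancel, circ_sum_left,
    map_sum]
  refine Finset.sum_congr rfl fun k hk => ?_
  rw [circ_sum_right, map_sum]
  refine Finset.sum_congr rfl fun l hl => ?_
  rw [circ_single_single, map_add, toP_single, toP_single,
    show k + 1 + (l + 1) - 1 = k + l + 1 from by omega,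
    show k + 1 + (l + 1) = k + l + 2 from by omega,
    ← Polynomial.C_mul_X_pow_eq_monomial, ← Polynomial.C_mul_X_pow_eq_monomial]
  simp only [map_neg, map_mul]
  ring
end
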